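/- Assume (D+) and let (V,u) be a weak solution of either the Lifshitz–Slyozov system or the Lifshitz–Slyozov system with nucleation, with total mass M. If V₀ > d(0), then d(0) < V(t) ≤ M for all t ≥ 0. -/

import Mathlib

open Set Filter Topology MeasureTheory

/-- Assumption (D+): `d : [0,∞) → [0,∞)` is C¹ with `0 < α ≤ d'(x) ≤ β` for all `x ≥ 0`. -/
structure DPlus (d d' : ℝ → ℝ) (α β : ℝ) : Prop where
  nonneg : ∀ x ∈ Set.Ici (0:ℝ), 0 ≤ d x
  hasDeriv : ∀ x ∈ Set.Ici (0:ℝ), HasDerivWithinAt d (d' x) (Set.Ici 0) x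
  contDeriv : ContinuousOn d' (Set.Ici 0)
  alpha_pos : 0 < α
  deriv_lb : ∀ x ∈ Set.Ici (0:ℝ), α ≤ d' x
  deriv_ub : ∀ x ∈ Set.Ici (0:ℝ), d' x ≤ β

/-- A C¹ test function `φ` (with derivative `φ'`) on `[0,∞)` satisfying
`|φ(x)| ≤ C(1+x²)` and `|φ'(x)| ≤ C(1+x)` for some constant `C`. -/
def IsTest (φ φ' : ℝ → ℝ) : Prop :=
  (∀ x ∈ Set.Ici (0:ℝ), HasDerivWithinAt φ (φ' x) (Set.Ici 0) x) ∧
  ContinuousOn φ' (Set.Ici 0) ∧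
  ∃ C : ℝ, ∀ x ∈ Set.Ici (0:ℝ), |φ x| ≤ C * (1 + x ^ 2) ∧ |φ' x| ≤ C * (1 + x)

/-- Weak solution of the Lifshitz–Slyozov system with nucleation parameter `ε`
(`ε = 0`: no nucleation; `ε = 1`: nucleation with nucleus size `i0`) and total mass `M`:
`V` is C¹ on `[0,∞)`, `u(t,·) ≥ 0` with `(1+x²)u(t,x)` integrable, mass conservation
`V(t) + ∫₀^∞ x u(t,x) dx = M` holds, and for every test function `φ`,
`d/dt ∫₀^∞ φ(x)u(t,x)dx = ∫₀^∞ φ'(x)(V(t)−d(x))u(t,x)dx + ε φ(0) V(t)^{i0}`. -/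
structure WeakSolLSN (d : ℝ → ℝ) (M ε : ℝ) (i0 : ℕ) (V : ℝ → ℝ) (u : ℝ → ℝ → ℝ) : Prop where
  u_nonneg : ∀ t ∈ Set.Ici (0:ℝ), ∀ x ∈ Set.Ici (0:ℝ), 0 ≤ u t x
  V_contDiff : ContDiffOn ℝ 1 V (Set.Ici 0)
  u_int : ∀ t ∈ Set.Ici (0:ℝ), IntegrableOn (fun x => (1 + x ^ 2) * u t x) (Set.Ioi 0)
  mass : ∀ t ∈ Set.Ici (0:ℝ), V t + ∫ x in Set.Ioi (0:ℝ), x * u t x = M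
  weak : ∀ φ φ' : ℝ → ℝ, IsTest φ φ' → ∀ t ∈ Set.Ici (0:ℝ),
    HasDerivWithinAt (fun s => ∫ x in Set.Ioi (0:ℝ), φ x * u s x)
      ((∫ x in Set.Ioi (0:ℝ), φ' x * (V t - d x) * u t x) + ε * φ 0 * V t ^ i0)
      (Set.Ici 0) t

/-- Lemma 2.1, item 1: under (D+), any weak solution of the
Lifshitz–Slyozov system (`ε = 0`) or of the Lifshitz–Slyozov system with nucleation
(`ε = 1`), with total mass `M` and `V₀ > d(0)`, satisfies `d(0) < V(t) ≤ M` for all `t ≥ 0`. -/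
theorem LS_monomer_bounds
    (d d' : ℝ → ℝ) (α β : ℝ) (hD : DPlus d d' α β)
    (M ε : ℝ) (i0 : ℕ) (hε : ε = 0 ∨ ε = 1) (hi0 : 1 ≤ i0)
    (hM : 0 < M)
    (V : ℝ → ℝ) (u : ℝ → ℝ → ℝ)
    (hsol : WeakSolLSN d M ε i0 V u)
    (hV0 : d 0 < V 0) :
    ∀ t ∈ Ici (0:ℝ), d 0 < V t ∧ V t ≤ M := by
  -- basic facts
  have hVcont : ContinuousOn V (Set.Ici 0) := hsol.V_contDiff.continuousOn
  have hdcont : ContinuousOn d (Set.Ici 0) := fun x hx => (hD.hasDeriv x hx).continuousWithinAt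
  have hβpos : 0 < β := lt_of_lt_of_le hD.alpha_pos
    (le_trans (hD.deriv_lb 0 (Set.mem_Ici.mpr le_rfl)) (hD.deriv_ub 0 (Set.mem_Ici.mpr le_rfl)))
  have hd0 : 0 ≤ d 0 := hD.nonneg 0 (Set.mem_Ici.mpr le_rfl)
  -- d is monotone on [0,∞)
  have hdmono : MonotoneOn d (Set.Ici 0) := by
    apply monotoneOn_of_deriv_nonneg (convex_Ici 0) hdcont
    · intro x hx
      rw [interior_Ici] at hx
      exact ((hD.hasDeriv x (Set.mem_Ici.mpr (le_of_lt hx))).hasDerivAt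
        (Ici_mem_nhds hx)).differentiableAt.differentiableWithinAt
    · intro x hx
      rw [interior_Ici] at hx
      rw [((hD.hasDeriv x (Set.mem_Ici.mpr (le_of_lt hx))).hasDerivAt (Ici_mem_nhds hx)).deriv]
      exact le_trans hD.alpha_pos.le (hD.deriv_lb x (Set.mem_Ici.mpr (le_of_lt hx)))
  -- linear bound on d
  have hdlin : ∀ x : ℝ, 0 ≤ x → d x ≤ d 0 + β * x := by
    intro x hx
    have h := Convex.norm_image_sub_le_of_norm_hasDerivWithin_le hD.hasDeriv
      (fun y hy => by
        rw [Real.norm_eq_abs, abs_of_pos (lt_of_lt_of_le hD.alpha_pos (hD.deriv_lb y hy))]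
        exact hD.deriv_ub y hy)
      (convex_Ici 0) (le_refl (0:ℝ)) hx
    rw [Real.norm_eq_abs, Real.norm_eq_abs, sub_zero, abs_of_nonneg hx] at h
    have := le_trans (le_abs_self _) h
    linarith
  -- measurability and integrability of u t
  have hmeas_u : ∀ t ∈ Set.Ici (0:ℝ),
      AEStronglyMeasurable (u t) (volume.restrict (Set.Ioi 0)) := by
    intro t ht
    have h1 : Continuous fun x : ℝ => (1 + x ^ 2)⁻¹ :=
      Continuous.inv₀ (by continuity) (fun x => by positivity)
    have h2 := h1.aestronglyMeasurable.mul (hsol.u_int t ht).aestronglyMeasurable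
    refine h2.congr (Filter.Eventually.of_forall fun x => ?_)
    have : (1 : ℝ) + x ^ 2 ≠ 0 := by positivity
    simp only [Pi.mul_apply]
    field_simp
  have hint_u : ∀ t ∈ Set.Ici (0:ℝ), IntegrableOn (u t) (Set.Ioi 0) := by
    intro t ht
    refine Integrable.mono (hsol.u_int t ht) (hmeas_u t ht) ?_
    refine (ae_restrict_iff' measurableSet_Ioi).2 (Filter.Eventually.of_forall fun x hx => ?_)
    have hu0 : 0 ≤ u t x := hsol.u_nonneg t ht x (Set.mem_Ici.mpr (le_of_lt hx))
    rw [Real.norm_eq_abs, Real.norm_eq_abs, abs_of_nonneg hu0,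
      abs_of_nonneg (by positivity : (0:ℝ) ≤ (1 + x ^ 2) * u t x)]
    nlinarith
  have hint_vd : ∀ t ∈ Set.Ici (0:ℝ),
      IntegrableOn (fun x => (V t - d x) * u t x) (Set.Ioi 0) := by
    intro t ht
    have hK0 : 0 ≤ |V t| + d 0 + β := by positivity
    refine Integrable.mono ((hsol.u_int t ht).const_mul (|V t| + d 0 + β))
      (((continuous_const.continuousOn.sub (hdcont.mono (fun x hx => le_of_lt hx))).aestronglyMeasurable
        measurableSet_Ioi).mul (hmeas_u t ht)) ?_
    refine (ae_restrict_iff' measurableSet_Ioi).2 (Filter.Eventually.of_forall fun x hx => ?_)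
    have hx0 : (0:ℝ) < x := hx
    have hu0 : 0 ≤ u t x := hsol.u_nonneg t ht x hx0.le
    have hdx0 : 0 ≤ d x := hD.nonneg x hx0.le
    have hdx : d x ≤ d 0 + β * x := hdlin x hx0.le
    rw [Real.norm_eq_abs, Real.norm_eq_abs, abs_mul,
      abs_of_nonneg hu0, abs_of_nonneg
        (by positivity : (0:ℝ) ≤ (|V t| + d 0 + β) * ((1 + x ^ 2) * u t x))]
    have habs : |V t - d x| ≤ (|V t| + d 0 + β) * (1 + x ^ 2) := by
      have h1 : |V t - d x| ≤ |V t| + d x := by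
        calc |V t - d x| ≤ |V t| + |d x| := abs_sub _ _
        _ = |V t| + d x := by rw [abs_of_nonneg hdx0]
      have hx1 : x ≤ 1 + x ^ 2 := by nlinarith
      nlinarith [abs_nonneg (V t)]
    calc |V t - d x| * u t x ≤ ((|V t| + d 0 + β) * (1 + x ^ 2)) * u t x :=
          mul_le_mul_of_nonneg_right habs hu0
      _ = (|V t| + d 0 + β) * ((1 + x ^ 2) * u t x) := by ring
  -- the derivative of V
  have hVderiv : ∀ t ∈ Set.Ici (0:ℝ),
      HasDerivWithinAt V (-(∫ x in Set.Ioi (0:ℝ), (V t - d x) * u t x)) (Set.Ici 0) t := by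
    intro t ht
    have hTest : IsTest (fun x => x) (fun _ => 1) := by
      refine ⟨fun x _ => hasDerivWithinAt_id x _, continuousOn_const, 1, fun x hx => ?_⟩
      have hx0 : (0:ℝ) ≤ x := hx
      constructor
      · rw [abs_of_nonneg hx0]; nlinarith
      · rw [abs_one]; linarith
    have hw := hsol.weak (fun x => x) (fun _ => 1) hTest t ht
    simp only [one_mul, mul_zero, zero_mul, add_zero] at hw
    have hw' : HasDerivWithinAt (fun s => M - V s)
        (∫ x in Set.Ioi (0:ℝ), (V t - d x) * u t x) (Set.Ici 0) t := by
      refine hw.congr (fun s hs => ?_) ?_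
      · have := hsol.mass s hs; linarith
      · have := hsol.mass t ht; linarith
    have := hw'.const_sub M
    simpa using this
  -- (a) V t ≤ M
  have hVleM : ∀ t ∈ Set.Ici (0:ℝ), V t ≤ M := by
    intro t ht
    have hnn : 0 ≤ ∫ x in Set.Ioi (0:ℝ), x * u t x :=
      setIntegral_nonneg measurableSet_Ioi fun x hx =>
        mul_nonneg (le_of_lt hx) (hsol.u_nonneg t ht x (Set.mem_Ici.mpr (le_of_lt hx)))
    have := hsol.mass t ht
    linarith
  -- continuity of ρ
  have hρcont : ContinuousOn (fun s => ∫ x in Set.Ioi (0:ℝ), u s x) (Set.Ici 0) := by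
    intro t ht
    have hTest : IsTest (fun _ => 1) (fun _ => 0) := by
      refine ⟨fun x _ => hasDerivWithinAt_const x _ 1, continuousOn_const, 1, fun x hx => ?_⟩
      have hx0 : (0:ℝ) ≤ x := hx
      constructor
      · rw [abs_one]; nlinarith
      · rw [abs_zero]; linarith
    have hw := (hsol.weak (fun _ => 1) (fun _ => 0) hTest t ht).continuousWithinAt
    refine hw.congr (fun s _ => ?_) ?_ <;> simp
  -- key inequality
  have hkey : ∀ t ∈ Set.Ici (0:ℝ),
      (∫ x in Set.Ioi (0:ℝ), (V t - d x) * u t x)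
        ≤ (V t - d 0) * ∫ x in Set.Ioi (0:ℝ), u t x := by
    intro t ht
    have h1 : (∫ x in Set.Ioi (0:ℝ), (V t - d x) * u t x)
        ≤ ∫ x in Set.Ioi (0:ℝ), (V t - d 0) * u t x := by
      refine setIntegral_mono_on (hint_vd t ht) ((hint_u t ht).const_mul _)
        measurableSet_Ioi fun x hx => ?_
      have hdx : d 0 ≤ d x := hdmono (Set.mem_Ici.mpr le_rfl) (Set.mem_Ici.mpr (le_of_lt hx)) (le_of_lt hx)
      exact mul_le_mul_of_nonneg_right (by linarith) (hsol.u_nonneg t ht x (Set.mem_Ici.mpr (le_of_lt hx)))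
    rwa [integral_const_mul] at h1
  -- (b) d 0 < V t, by contradiction
  have hdlt : ∀ t ∈ Set.Ici (0:ℝ), d 0 < V t := by
    intro t ht
    by_contra hcon
    push_neg at hcon
    set S : Set ℝ := {s | s ∈ Set.Icc 0 t ∧ V s ≤ d 0} with hS
    have hSne : S.Nonempty := ⟨t, ⟨⟨ht, le_refl t⟩, hcon⟩⟩
    have hSclosed : IsClosed S := by
      have : S = Set.Icc 0 t ∩ V ⁻¹' Set.Iic (d 0) := by
        ext s; simp [hS, Set.mem_Icc, and_assoc]
      rw [this]
      exact (hVcont.mono (fun s hs => hs.1)).preimage_isClosed_of_isClosed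
        isClosed_Icc isClosed_Iic
    have hSbdd : BddBelow S := ⟨0, fun s hs => hs.1.1⟩
    set t₁ : ℝ := sInf S with ht₁
    have ht₁S : t₁ ∈ S := hSclosed.csInf_mem hSne hSbdd
    have ht₁0 : 0 ≤ t₁ := ht₁S.1.1
    have ht₁pos : 0 < t₁ := by
      rcases lt_or_eq_of_le ht₁0 with h | h
      · exact h
      · exfalso; have := ht₁S.2; rw [← h] at this; linarith
    have hbefore : ∀ s, 0 ≤ s → s < t₁ → d 0 < V s := by
      intro s hs0 hst₁
      by_contra h
      push_neg at h
      have hsS : s ∈ S := ⟨⟨hs0, le_trans hst₁.le ht₁S.1.2⟩, h⟩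
      exact absurd (csInf_le hSbdd hsS) (not_le.mpr hst₁)
    -- bound ρ on [0, t₁]
    obtain ⟨s₀, hs₀, hCmax⟩ := isCompact_Icc.exists_isMaxOn
      ⟨0, Set.left_mem_Icc.mpr ht₁0⟩
      (hρcont.mono (fun s hs => hs.1))
    have hC : ∀ y ∈ Set.Icc 0 t₁, (∫ x in Set.Ioi (0:ℝ), u y x) ≤ ∫ x in Set.Ioi (0:ℝ), u s₀ x :=
      fun y hy => hCmax hy
    set C : ℝ := ∫ x in Set.Ioi (0:ℝ), u s₀ x with hCdef
    -- the auxiliary function g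
    set g : ℝ → ℝ := fun s => (V s - d 0) * Real.exp (C * s) with hg
    have hgmono : MonotoneOn g (Set.Icc 0 t₁) := by
      apply monotoneOn_of_deriv_nonneg (convex_Icc 0 t₁)
      · exact ((hVcont.mono (fun s hs => hs.1)).sub continuousOn_const).mul
          (Real.continuous_exp.comp (continuous_const.mul continuous_id)).continuousOn
      · intro s hs
        rw [interior_Icc] at hs
        have hsIci : s ∈ Set.Ici (0:ℝ) := hs.1.le
        have hVs : HasDerivAt V (-(∫ x in Set.Ioi (0:ℝ), (V s - d x) * u s x)) s :=
          (hVderiv s hsIci).hasDerivAt (Ici_mem_nhds hs.1)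
        have hexp : HasDerivAt (fun r : ℝ => Real.exp (C * r)) (Real.exp (C * s) * C) s := by
          have : HasDerivAt (fun r : ℝ => C * r) C s := by
            simpa using (hasDerivAt_id s).const_mul C
          exact this.exp
        exact ((hVs.sub_const (d 0)).mul hexp).differentiableAt.differentiableWithinAt
      · intro s hs
        rw [interior_Icc] at hs
        have hsIci : s ∈ Set.Ici (0:ℝ) := hs.1.le
        have hVs : HasDerivAt V (-(∫ x in Set.Ioi (0:ℝ), (V s - d x) * u s x)) s :=
          (hVderiv s hsIci).hasDerivAt (Ici_mem_nhds hs.1)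
        have hexp : HasDerivAt (fun r : ℝ => Real.exp (C * r)) (Real.exp (C * s) * C) s := by
          have : HasDerivAt (fun r : ℝ => C * r) C s := by
            simpa using (hasDerivAt_id s).const_mul C
          exact this.exp
        have hgd : HasDerivAt g
            ((-(∫ x in Set.Ioi (0:ℝ), (V s - d x) * u s x)) * Real.exp (C * s)
              + (V s - d 0) * (Real.exp (C * s) * C)) s :=
          (hVs.sub_const (d 0)).mul hexp
        rw [hgd.deriv]
        have hW : 0 < V s - d 0 := by
          have := hbefore s hs.1.le hs.2; linarith
        have hρleC : (∫ x in Set.Ioi (0:ℝ), u s x) ≤ C :=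
          hC s ⟨hs.1.le, hs.2.le⟩
        have hρnn : 0 ≤ ∫ x in Set.Ioi (0:ℝ), u s x :=
          setIntegral_nonneg measurableSet_Ioi fun x hx =>
            hsol.u_nonneg s hsIci x (Set.mem_Ici.mpr (le_of_lt hx))
        have hDle : (∫ x in Set.Ioi (0:ℝ), (V s - d x) * u s x)
            ≤ (V s - d 0) * C := by
          calc (∫ x in Set.Ioi (0:ℝ), (V s - d x) * u s x)
              ≤ (V s - d 0) * ∫ x in Set.Ioi (0:ℝ), u s x := hkey s hsIci
            _ ≤ (V s - d 0) * C := mul_le_mul_of_nonneg_left hρleC hW.le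
        have hepos : 0 < Real.exp (C * s) := Real.exp_pos _
        nlinarith
    have h0mem : (0:ℝ) ∈ Set.Icc 0 t₁ := Set.left_mem_Icc.mpr ht₁0
    have ht₁mem : t₁ ∈ Set.Icc 0 t₁ := Set.right_mem_Icc.mpr ht₁0
    have := hgmono h0mem ht₁mem ht₁0
    have hg0 : g 0 = V 0 - d 0 := by simp [hg]
    have hgt₁ : g t₁ ≤ 0 := by
      have hVt₁ : V t₁ ≤ d 0 := ht₁S.2
      have : 0 < Real.exp (C * t₁) := Real.exp_pos _
      simp only [hg]
      nlinarith
    rw [hg0] at this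
    linarith
  exact fun t ht => ⟨hdlt t ht, hVleM t ht⟩
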